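/- Let p be an odd prime and n ≥ 12 an integer. Then there exists a positive integer d with 2d+2 ≤ n ≤ 3d and |12d − 5n| ≤ 60 such that the Heisenberg group H = H_1(𝔽_{p^d}) (a group of order p^{3d}) admits a family 𝒮 of subgroups of its center Z(H), each of index p^n in H, with |𝒮| ≥ p^{(n−2d)(3d−n)}/(d(p^d−1)), such that for any two distinct N, N' ∈ 𝒮 the quotient groups H/N and H/N' (each of order p^n) are not isomorphic. -/

import Mathlib

set_option linter.unusedSectionVars false

/-- The generalized Heisenberg group `H_m(K)`: underlying set `K^m × K^m × K` with
multiplication `(u,v,s)·(u',v',s') = (u+u', v+v', s+s'+u·v')`. -/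
structure Heisenberg (K : Type*) (m : ℕ) where
  x : Fin m → K
  y : Fin m → K
  z : K

namespace Heisenberg

variable {K : Type*} [Field K] {m : ℕ}

@[ext] lemma ext' {a b : Heisenberg K m} (hx : a.x = b.x) (hy : a.y = b.y) (hz : a.z = b.z) :
    a = b := by cases a; cases b; simp_all

instance : Mul (Heisenberg K m) :=
  ⟨fun a b => ⟨a.x + b.x, a.y + b.y, a.z + b.z + dotProduct a.x b.y⟩⟩

instance : One (Heisenberg K m) := ⟨⟨0, 0, 0⟩⟩

instance : Inv (Heisenberg K m) :=
  ⟨fun a => ⟨-a.x, -a.y, -a.z + dotProduct a.x a.y⟩⟩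

@[simp] lemma mul_x (a b : Heisenberg K m) : (a * b).x = a.x + b.x := rfl
@[simp] lemma mul_y (a b : Heisenberg K m) : (a * b).y = a.y + b.y := rfl
@[simp] lemma mul_z (a b : Heisenberg K m) :
    (a * b).z = a.z + b.z + dotProduct a.x b.y := rfl
@[simp] lemma one_x : (1 : Heisenberg K m).x = 0 := rfl
@[simp] lemma one_y : (1 : Heisenberg K m).y = 0 := rfl
@[simp] lemma one_z : (1 : Heisenberg K m).z = 0 := rfl
@[simp] lemma inv_x (a : Heisenberg K m) : a⁻¹.x = -a.x := rfl
@[simp] lemma inv_y (a : Heisenberg K m) : a⁻¹.y = -a.y := rfl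
@[simp] lemma inv_z (a : Heisenberg K m) : a⁻¹.z = -a.z + dotProduct a.x a.y := rfl

instance instGroup : Group (Heisenberg K m) where
  mul_assoc a b c := by
    ext <;> simp [add_dotProduct, dotProduct_add] <;> ring
  one_mul a := by ext <;> simp
  mul_one a := by ext <;> simp
  inv_mul_cancel a := by
    ext <;> simp [neg_dotProduct]

end Heisenberg
namespace HProof
open Module Submodule

variable {p : ℕ} [Fact p.Prime] {K : Type} [Field K] [Algebra (ZMod p) K]

/-- element constructor for `Heisenberg K 1` -/
def el (u v s : K) : Heisenberg K 1 := ⟨fun _ => u, fun _ => v, s⟩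

@[simp] lemma el_x (u v s : K) (i : Fin 1) : (el u v s).x i = u := rfl
@[simp] lemma el_y (u v s : K) (i : Fin 1) : (el u v s).y i = v := rfl
@[simp] lemma el_z (u v s : K) : (el u v s).z = s := rfl

lemma dot1 (u v : Fin 1 → K) : dotProduct u v = u 0 * v 0 := by
  simp [dotProduct]

lemma fun1 (u : Fin 1 → K) : u = fun _ => u 0 :=
  funext fun i => by rw [Subsingleton.elim i 0]

lemma eq_el (h : Heisenberg K 1) : h = el (h.x 0) (h.y 0) h.z := by
  refine Heisenberg.ext' ?_ ?_ rfl
  · exact fun1 h.x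
  · exact fun1 h.y

lemma el_mul (u v s u' v' s' : K) :
    el u v s * el u' v' s' = el (u + u') (v + v') (s + s' + u * v') := by
  refine Heisenberg.ext' rfl rfl ?_
  show s + s' + dotProduct _ _ = _
  rw [dot1]; rfl

lemma el00_central (s : K) (h : Heisenberg K 1) :
    el 0 0 s * h = h * el 0 0 s := by
  refine Heisenberg.ext' ?_ ?_ ?_ <;>
    simp [Heisenberg.mul_x, Heisenberg.mul_y, Heisenberg.mul_z, dot1, add_comm]

/-- the central subgroup attached to a `ZMod p`-submodule of `K` -/
def hat (N : Submodule (ZMod p) K) : Subgroup (Heisenberg K 1) where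
  carrier := {h | h.x = 0 ∧ h.y = 0 ∧ h.z ∈ N}
  one_mem' := ⟨rfl, rfl, N.zero_mem⟩
  mul_mem' := by
    rintro a b ⟨hax, hay, haz⟩ ⟨hbx, hby, hbz⟩
    refine ⟨by simp [hax, hbx], by simp [hay, hby], ?_⟩
    show a.z + b.z + dotProduct a.x b.y ∈ N
    rw [dot1, hax]
    simpa using N.add_mem haz hbz
  inv_mem' := by
    rintro a ⟨hax, hay, haz⟩
    refine ⟨by simp [hax], by simp [hay], ?_⟩
    show -a.z + dotProduct a.x a.y ∈ N
    rw [dot1, hax]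
    simpa using N.neg_mem haz

lemma mem_hat {N : Submodule (ZMod p) K} {h : Heisenberg K 1} :
    h ∈ hat N ↔ h.x = 0 ∧ h.y = 0 ∧ h.z ∈ N := Iff.rfl

lemma el_mem_hat {N : Submodule (ZMod p) K} {s : K} : el 0 0 s ∈ hat N ↔ s ∈ N := by
  constructor
  · rintro ⟨-, -, hz⟩; exact hz
  · intro hs; exact ⟨rfl, rfl, hs⟩

lemma hat_le_center (N : Submodule (ZMod p) K) :
    hat N ≤ Subgroup.center (Heisenberg K 1) := by
  rintro h ⟨hx, hy, -⟩
  rw [Subgroup.mem_center_iff]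
  intro g
  refine Heisenberg.ext' (by simp [add_comm]) (by simp [add_comm]) ?_
  show g.z + h.z + dotProduct g.x h.y = h.z + g.z + dotProduct h.x g.y
  rw [hx, hy]
  simp [add_comm]

instance hat_normal (N : Submodule (ZMod p) K) : (hat N).Normal := by
  constructor
  intro h hm g
  have : g * h = h * g := by
    have := hat_le_center N hm
    rw [Subgroup.mem_center_iff] at this
    exact this g
  rw [this, mul_assoc, mul_inv_cancel, mul_one]
  exact hm

lemma hat_injective : Function.Injective (hat (p := p) (K := K)) := by
  intro N M h
  ext s
  constructor
  · intro hs
    have : el 0 0 s ∈ hat N := el_mem_hat.2 hs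
    rw [h] at this
    exact el_mem_hat.1 this
  · intro hs
    have : el 0 0 s ∈ hat M := el_mem_hat.2 hs
    rw [← h] at this
    exact el_mem_hat.1 this

/-- key computational lemma for coset equality -/
lemma inv_mul_mem_hat {N : Submodule (ZMod p) K} (a b : Heisenberg K 1) :
    a⁻¹ * b ∈ hat N ↔ a.x = b.x ∧ a.y = b.y ∧ b.z - a.z ∈ N := by
  rw [mem_hat]
  have hx : (a⁻¹ * b).x = -a.x + b.x := rfl
  have hy : (a⁻¹ * b).y = -a.y + b.y := rfl
  have hz : (a⁻¹ * b).z = (-a.z + dotProduct a.x a.y) + b.z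
      + dotProduct (-a.x) b.y := rfl
  constructor
  · rintro ⟨h1, h2, h3⟩
    rw [hx, neg_add_eq_zero] at h1
    rw [hy, neg_add_eq_zero] at h2
    refine ⟨h1, h2, ?_⟩
    rw [hz, dot1, dot1, ← h2] at h3
    have he : -a.z + a.x 0 * a.y 0 + b.z + (-a.x) 0 * a.y 0 = b.z - a.z := by
      simp only [Pi.neg_apply]; ring
    rwa [he] at h3
  · rintro ⟨h1, h2, h3⟩
    refine ⟨by rw [hx, h1]; simp, by rw [hy, h2]; simp, ?_⟩
    rw [hz, dot1, dot1, ← h2, h1]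
    have he : -a.z + b.x 0 * a.y 0 + b.z + (-b.x) 0 * a.y 0 = b.z - a.z := by
      simp only [Pi.neg_apply]; ring
    rwa [he]

lemma coe_eq_iff {N : Submodule (ZMod p) K} (a b : Heisenberg K 1) :
    (a : Heisenberg K 1 ⧸ hat N) = b ↔ a.x = b.x ∧ a.y = b.y ∧ b.z - a.z ∈ N := by
  rw [QuotientGroup.eq, inv_mul_mem_hat]

lemma cent_xy {N₀ : Submodule (ZMod p) K} (hN₀ : N₀ ≠ ⊤) (h : Heisenberg K 1)
    (hc : ∀ u v : K, u * h.y 0 - h.x 0 * v ∈ N₀) : h.x 0 = 0 ∧ h.y 0 = 0 := by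
  constructor
  · by_contra hx
    apply hN₀
    rw [eq_top_iff']
    intro w
    have := hc 0 (-(h.x 0)⁻¹ * w)
    simpa [mul_inv_cancel_left₀ hx] using this
  · by_contra hy
    apply hN₀
    rw [eq_top_iff']
    intro w
    have := hc (w * (h.y 0)⁻¹) 0
    simpa [inv_mul_cancel_right₀ hy] using this

end HProof
namespace HProof
open Module Submodule

variable {p : ℕ} [Fact p.Prime] {K : Type} [Field K] [Algebra (ZMod p) K]

section Phi

variable {N N' : Submodule (ZMod p) K}

/-- xy-part of the canonical representative -/
noncomputable def bof (Φ : Heisenberg K 1 →* (Heisenberg K 1 ⧸ hat N')) (g : Heisenberg K 1) :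
    K × K := ((Φ g).out.x 0, (Φ g).out.y 0)

noncomputable def bmap (Φ : Heisenberg K 1 →* (Heisenberg K 1 ⧸ hat N')) (x : K × K) :
    K × K := bof Φ (el x.1 x.2 0)

noncomputable def amap (Φ : Heisenberg K 1 →* (Heisenberg K 1 ⧸ hat N')) (s : K) :
    K ⧸ N' := Submodule.Quotient.mk ((Φ (el 0 0 s)).out.z)

variable (Φ : Heisenberg K 1 →* (Heisenberg K 1 ⧸ hat N'))

lemma out_xy_eq_zero (hN' : N' ≠ ⊤) (q : Heisenberg K 1 ⧸ hat N')
    (hq : ∀ r : Heisenberg K 1 ⧸ hat N', q * r = r * q) :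
    q.out.x 0 = 0 ∧ q.out.y 0 = 0 := by
  set r := q.out with hr
  have hout : (r : Heisenberg K 1 ⧸ hat N') = q := QuotientGroup.out_eq' q
  apply cent_xy hN'
  intro u v
  have h1 : ((r * el u v 0 : Heisenberg K 1) : Heisenberg K 1 ⧸ hat N')
      = ((el u v 0 * r : Heisenberg K 1) : Heisenberg K 1 ⧸ hat N') := by
    rw [QuotientGroup.mk_mul, QuotientGroup.mk_mul, hout, hq]
  have h2 := (coe_eq_iff (N := N') _ _).1 h1
  have h3 := h2.2.2
  have hz : (el u v 0 * r).z - (r * el u v 0).z = u * r.y 0 - r.x 0 * v := by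
    show (0 + r.z + dotProduct _ r.y) - (r.z + 0 + dotProduct r.x _) = _
    rw [dot1, dot1]
    simp
  rwa [hz] at h3

lemma phi_central (hs : Function.Surjective Φ) (s : K) (r : Heisenberg K 1 ⧸ hat N') :
    Φ (el 0 0 s) * r = r * Φ (el 0 0 s) := by
  obtain ⟨g, rfl⟩ := hs r
  rw [← map_mul, ← map_mul, el00_central]

lemma bof_el00 (hN' : N' ≠ ⊤) (hs : Function.Surjective Φ) (s : K) :
    bof Φ (el 0 0 s) = 0 := by
  have h := out_xy_eq_zero hN' (Φ (el 0 0 s)) (phi_central Φ hs s)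
  show (_, _) = (0, 0)
  rw [h.1, h.2]

lemma bof_mul (g h : Heisenberg K 1) : bof Φ (g * h) = bof Φ g + bof Φ h := by
  have h1 : (((Φ (g * h)).out : Heisenberg K 1) : Heisenberg K 1 ⧸ hat N')
      = (((Φ g).out * (Φ h).out : Heisenberg K 1) : Heisenberg K 1 ⧸ hat N') := by
    rw [QuotientGroup.mk_mul, QuotientGroup.out_eq', QuotientGroup.out_eq',
      QuotientGroup.out_eq', map_mul]
  have h2 := (coe_eq_iff (N := N') _ _).1 h1
  have hx := congrFun h2.1 0
  have hy := congrFun h2.2.1 0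
  have hx' : ((Φ g).out * (Φ h).out).x 0 = (bof Φ g).1 + (bof Φ h).1 := rfl
  have hy' : ((Φ g).out * (Φ h).out).y 0 = (bof Φ g).2 + (bof Φ h).2 := rfl
  exact Prod.ext_iff.mpr ⟨hx.trans hx', hy.trans hy'⟩

lemma el_mul_el00 (u v s t : K) : el u v s * el 0 0 t = el u v (s + t) := by
  rw [el_mul]; simp

lemma bof_eq_bmap (hN' : N' ≠ ⊤) (hs : Function.Surjective Φ) (u v s : K) :
    bof Φ (el u v s) = bmap Φ (u, v) := by
  have : el u v s = el u v 0 * el 0 0 s := by rw [el_mul_el00]; simp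
  rw [this, bof_mul, bof_el00 Φ hN' hs, add_zero]
  rfl

lemma bmap_add (hN' : N' ≠ ⊤) (hs : Function.Surjective Φ) (x y : K × K) :
    bmap Φ (x + y) = bmap Φ x + bmap Φ y := by
  have h1 : el x.1 x.2 0 * el y.1 y.2 0 = el (x + y).1 (x + y).2 (x.1 * y.2) := by
    rw [el_mul]; simp
  have h2 := bof_mul Φ (el x.1 x.2 0) (el y.1 y.2 0)
  rw [h1, bof_eq_bmap Φ hN' hs] at h2
  exact h2

lemma amap_add (hN' : N' ≠ ⊤) (hs : Function.Surjective Φ) (s t : K) :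
    amap Φ (s + t) = amap Φ s + amap Φ t := by
  have h1 : (((Φ (el 0 0 (s + t))).out : Heisenberg K 1) : Heisenberg K 1 ⧸ hat N')
      = (((Φ (el 0 0 s)).out * (Φ (el 0 0 t)).out : Heisenberg K 1) :
          Heisenberg K 1 ⧸ hat N') := by
    rw [QuotientGroup.mk_mul, QuotientGroup.out_eq', QuotientGroup.out_eq',
      QuotientGroup.out_eq', ← map_mul, el_mul_el00]
  have h2 := ((coe_eq_iff (N := N') _ _).1 h1).2.2
  have hx0 := (out_xy_eq_zero hN' (Φ (el 0 0 s)) (phi_central Φ hs s)).1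
  have hz : ((Φ (el 0 0 s)).out * (Φ (el 0 0 t)).out).z
      = (Φ (el 0 0 s)).out.z + (Φ (el 0 0 t)).out.z := by
    show _ + _ + dotProduct _ _ = _
    rw [dot1, hx0, zero_mul, add_zero]
  rw [hz] at h2
  unfold amap
  rw [← Submodule.Quotient.mk_add, Submodule.Quotient.eq]
  simpa [neg_sub] using N'.neg_mem h2

end Phi

end HProof
namespace HProof
open Module Submodule

variable {p : ℕ} [Fact p.Prime] {K : Type} [Field K] [Algebra (ZMod p) K]

/-- the standard symplectic form -/
def om (x y : K × K) : K := x.1 * y.2 - y.1 * x.2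

section Phi2

variable {N N' : Submodule (ZMod p) K}
variable (Φ : Heisenberg K 1 →* (Heisenberg K 1 ⧸ hat N'))

lemma amap_ker (hN' : N' ≠ ⊤) (hs : Function.Surjective Φ)
    (hk : ∀ h, Φ h = 1 ↔ h ∈ hat N) (s : K) :
    amap Φ s = 0 ↔ s ∈ N := by
  set r := (Φ (el 0 0 s)).out with hrdef
  have hxy := out_xy_eq_zero hN' (Φ (el 0 0 s)) (phi_central Φ hs s)
  have hrx : r.x = 0 := by rw [fun1 r.x, hxy.1]; rfl
  have hry : r.y = 0 := by rw [fun1 r.y, hxy.2]; rfl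
  have hout : (r : Heisenberg K 1 ⧸ hat N') = Φ (el 0 0 s) := QuotientGroup.out_eq' _
  constructor
  · intro h0
    have hz : r.z ∈ N' := (Submodule.Quotient.mk_eq_zero N').1 h0
    have : r ∈ hat N' := ⟨hrx, hry, hz⟩
    have h1 : Φ (el 0 0 s) = 1 := by
      rw [← hout, QuotientGroup.eq_one_iff]; exact this
    exact el_mem_hat.1 ((hk _).1 h1)
  · intro hsN
    have h1 : Φ (el 0 0 s) = 1 := (hk _).2 (el_mem_hat.2 hsN)
    have hr1 : (r : Heisenberg K 1 ⧸ hat N') = 1 := by rw [hout, h1]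
    have : r ∈ hat N' := (QuotientGroup.eq_one_iff r).1 hr1
    exact (Submodule.Quotient.mk_eq_zero N').2 this.2.2

lemma source_xy (hN : N ≠ ⊤) (hs : Function.Surjective Φ)
    (hk : ∀ h, Φ h = 1 ↔ h ∈ hat N) (g : Heisenberg K 1) (t : K)
    (hg : Φ g = ((el 0 0 t : Heisenberg K 1) : Heisenberg K 1 ⧸ hat N')) :
    g.x 0 = 0 ∧ g.y 0 = 0 := by
  have hcen : ∀ r : Heisenberg K 1 ⧸ hat N', Φ g * r = r * Φ g := by
    intro r
    obtain ⟨h, rfl⟩ := QuotientGroup.mk_surjective r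
    rw [hg, ← QuotientGroup.mk_mul, ← QuotientGroup.mk_mul, el00_central]
  apply cent_xy hN
  intro u v
  have h1 : Φ ((el u v 0 * g)⁻¹ * (g * el u v 0)) = 1 := by
    rw [map_mul, map_inv, map_mul, map_mul, hcen (Φ (el u v 0))]
    group
  have h2 := (inv_mul_mem_hat _ _).1 ((hk _).1 h1)
  have h3 := h2.2.2
  have hz : (g * el u v 0).z - (el u v 0 * g).z = g.x 0 * v - u * g.y 0 := by
    show (g.z + 0 + dotProduct g.x _) - (0 + g.z + dotProduct _ g.y) = _
    rw [dot1, dot1]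
    simp
  rw [hz] at h3
  simpa using N.neg_mem h3

lemma amap_surj (hN : N ≠ ⊤) (hN' : N' ≠ ⊤) (hs : Function.Surjective Φ)
    (hk : ∀ h, Φ h = 1 ↔ h ∈ hat N) (t : K) :
    ∃ s, amap Φ s = Submodule.Quotient.mk t := by
  obtain ⟨g, hg⟩ := hs ((el 0 0 t : Heisenberg K 1) : Heisenberg K 1 ⧸ hat N')
  have hxy := source_xy Φ hN hs hk g t hg
  have hgel : g = el 0 0 g.z := by
    have h := eq_el g
    rw [hxy.1, hxy.2] at h
    exact h
  refine ⟨g.z, ?_⟩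
  have h1 : ((((Φ (el 0 0 g.z)).out : Heisenberg K 1)) : Heisenberg K 1 ⧸ hat N')
      = ((el 0 0 t : Heisenberg K 1) : Heisenberg K 1 ⧸ hat N') := by
    rw [QuotientGroup.out_eq', ← hgel, hg]
  have h2 := ((coe_eq_iff (N := N') _ _).1 h1).2.2
  show Submodule.Quotient.mk _ = Submodule.Quotient.mk _
  rw [Submodule.Quotient.eq]
  simpa using N'.neg_mem h2

lemma key_id (hN' : N' ≠ ⊤) (hs : Function.Surjective Φ) (x y : K × K) :
    amap Φ (om x y) = Submodule.Quotient.mk (om (bmap Φ x) (bmap Φ y)) := by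
  set g₁ := el x.1 x.2 0
  set g₂ := el y.1 y.2 0
  have hcomm : g₁ * g₂ = g₂ * g₁ * el 0 0 (om x y) := by
    show el x.1 x.2 0 * el y.1 y.2 0 = el y.1 y.2 0 * el x.1 x.2 0 * el 0 0 (om x y)
    rw [el_mul, el_mul, el_mul]
    refine Heisenberg.ext' (funext fun _ => by simp [add_comm]) (funext fun _ => by simp [add_comm]) ?_
    simp only [el_z]
    unfold om
    ring
  set r₁ := (Φ g₁).out with hr1
  set r₂ := (Φ g₂).out with hr2
  set r₃ := (Φ (el 0 0 (om x y))).out with hr3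
  have hy3 : r₃.y 0 = 0 :=
    (out_xy_eq_zero hN' (Φ (el 0 0 (om x y))) (phi_central Φ hs _)).2
  have h1 : ((r₁ * r₂ : Heisenberg K 1) : Heisenberg K 1 ⧸ hat N')
      = ((r₂ * r₁ * r₃ : Heisenberg K 1) : Heisenberg K 1 ⧸ hat N') := by
    rw [QuotientGroup.mk_mul, QuotientGroup.mk_mul, QuotientGroup.mk_mul,
      QuotientGroup.out_eq', QuotientGroup.out_eq', QuotientGroup.out_eq',
      ← map_mul, ← map_mul, ← map_mul, hcomm]
  have h2 := ((coe_eq_iff (N := N') _ _).1 h1).2.2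
  have hz : (r₂ * r₁ * r₃).z - (r₁ * r₂).z
      = r₃.z - (r₁.x 0 * r₂.y 0 - r₂.x 0 * r₁.y 0) := by
    show (r₂.z + r₁.z + dotProduct r₂.x r₁.y) + r₃.z
        + dotProduct (r₂.x + r₁.x) r₃.y
        - (r₁.z + r₂.z + dotProduct r₁.x r₂.y) = _
    rw [dot1, dot1, dot1]
    show _ + _ + (r₂.x + r₁.x) 0 * r₃.y 0 - _ = _
    rw [hy3]
    ring
  rw [hz] at h2
  show Submodule.Quotient.mk _ = Submodule.Quotient.mk _
  rw [Submodule.Quotient.eq]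
  exact h2

lemma bmap_inj (hN : N ≠ ⊤) (hN' : N' ≠ ⊤) (hs : Function.Surjective Φ)
    (hk : ∀ h, Φ h = 1 ↔ h ∈ hat N) (x : K × K) (hx : bmap Φ x = 0) : x = 0 := by
  set r₁ := (Φ (el x.1 x.2 0)).out with hr1
  have hx1 : r₁.x 0 = 0 := congrArg Prod.fst hx
  have hy1 : r₁.y 0 = 0 := congrArg Prod.snd hx
  have hrel : r₁ = el 0 0 r₁.z := by
    have h := eq_el r₁
    rw [hx1, hy1] at h
    exact h
  have hg : Φ (el x.1 x.2 0)
      = ((el 0 0 r₁.z : Heisenberg K 1) : Heisenberg K 1 ⧸ hat N') := by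
    rw [← hrel, hr1, QuotientGroup.out_eq']
  have := source_xy Φ hN hs hk (el x.1 x.2 0) r₁.z hg
  have e1 : x.1 = 0 := this.1
  have e2 : x.2 = 0 := this.2
  exact Prod.ext_iff.mpr ⟨e1, e2⟩

end Phi2

end HProof
namespace HProof
open Module Submodule

variable {p : ℕ} [Fact p.Prime] {K : Type} [Field K] [Algebra (ZMod p) K]

lemma card_submodule [Fintype K] (S : Submodule (ZMod p) K) :
    Nat.card S = p ^ finrank (ZMod p) S := by
  haveI : Fintype S := Fintype.ofFinite _
  rw [Nat.card_eq_fintype_card, card_eq_pow_finrank (K := ZMod p), ZMod.card]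

lemma nondeg [Fintype K] (φ : K →ₗ[ZMod p] ZMod p) (hφ : φ ≠ 0) (t : K) (ht : t ≠ 0) :
    ∃ w, φ (t * w) ≠ 0 := by
  obtain ⟨u, hu⟩ := DFunLike.ne_iff.1 hφ
  refine ⟨t⁻¹ * u, ?_⟩
  rw [mul_inv_cancel_left₀ ht]
  simpa using hu

lemma dual_rep [Fintype K] (φ : K →ₗ[ZMod p] ZMod p) (hφ : φ ≠ 0)
    (ψ : K →ₗ[ZMod p] ZMod p) : ∃ t : K, ∀ w, ψ w = φ (t * w) := by
  classical
  set bb := Module.finBasis (ZMod p) K with hbb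
  set T : K →ₗ[ZMod p] (Fin (finrank (ZMod p) K) → ZMod p) :=
    LinearMap.pi (fun i => φ ∘ₗ LinearMap.mulRight (ZMod p) (bb i)) with hT
  have hTinj : Function.Injective T := by
    rw [injective_iff_map_eq_zero]
    intro t ht0
    by_contra htne
    have hzero : (φ ∘ₗ LinearMap.mulLeft (ZMod p) t) = 0 := by
      apply bb.ext
      intro i
      have := congrFun ht0 i
      simpa [hT] using this
    obtain ⟨w, hw⟩ := nondeg φ hφ t htne
    exact hw (by simpa using DFunLike.congr_fun hzero w)
  have hcards : Fintype.card K = Fintype.card (Fin (finrank (ZMod p) K) → ZMod p) := by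
    rw [Fintype.card_fun, card_eq_pow_finrank (K := ZMod p) (V := K), ZMod.card,
      Fintype.card_fin]
  have hTsurj : Function.Surjective T :=
    ((Fintype.bijective_iff_injective_and_card T).2 ⟨hTinj, hcards⟩).2
  obtain ⟨t, ht⟩ := hTsurj (fun i => ψ (bb i))
  refine ⟨t, ?_⟩
  have : (φ ∘ₗ LinearMap.mulLeft (ZMod p) t) = ψ := by
    apply bb.ext
    intro i
    have := congrFun ht i
    simpa [hT] using this
  intro w
  exact (DFunLike.congr_fun this w).symm

/-- annihilator of a submodule w.r.t. the pairing `(t,w) ↦ φ (t*w)` -/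
def ann (φ : K →ₗ[ZMod p] ZMod p) (M : Submodule (ZMod p) K) : Submodule (ZMod p) K where
  carrier := {t | ∀ w ∈ M, φ (t * w) = 0}
  zero_mem' := by intro w hw; simp
  add_mem' := by
    intro s t hs ht w hw
    rw [add_mul, map_add, hs w hw, ht w hw, add_zero]
  smul_mem' := by
    intro z t ht w hw
    rw [smul_mul_assoc, map_smul, ht w hw, smul_zero]

lemma mem_ann {φ : K →ₗ[ZMod p] ZMod p} {M : Submodule (ZMod p) K} {t : K} :
    t ∈ ann φ M ↔ ∀ w ∈ M, φ (t * w) = 0 := Iff.rfl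

lemma ann_card [Fintype K] (φ : K →ₗ[ZMod p] ZMod p) (M : Submodule (ZMod p) K) {a : ℕ}
    (hd : finrank (ZMod p) M + a ≤ finrank (ZMod p) K) :
    p ^ a ≤ Nat.card (ann φ M) := by
  classical
  set r := finrank (ZMod p) M with hr
  set bM := Module.finBasis (ZMod p) M with hbM
  set L : K →ₗ[ZMod p] (Fin r → ZMod p) :=
    LinearMap.pi (fun i => φ ∘ₗ LinearMap.mulRight (ZMod p) (bM i : K)) with hL
  have hker : LinearMap.ker L ≤ ann φ M := by
    intro t ht
    rw [LinearMap.mem_ker] at ht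
    intro w hw
    -- use span induction over the basis of M
    have hspan : w ∈ Submodule.span (ZMod p) (Set.range (fun i => (bM i : K))) := by
      have h1 : (⟨w, hw⟩ : M) ∈ (⊤ : Submodule (ZMod p) M) := trivial
      rw [← bM.span_eq] at h1
      have h2 := Submodule.mem_map_of_mem (f := M.subtype) h1
      rw [Submodule.map_span] at h2
      have h3 : (Subtype.val '' Set.range ⇑bM) = Set.range (fun i => (bM i : K)) := by
        rw [← Set.range_comp]; rfl
      simpa [h3] using h2
    refine Submodule.span_induction ?_ ?_ ?_ ?_ hspan
    · rintro x ⟨i, rfl⟩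
      have := congrFun ht i
      simpa [hL] using this
    · simp
    · intro u v _ _ hu hv
      rw [mul_add, map_add, hu, hv, add_zero]
    · intro z u _ hu
      rw [mul_smul_comm, map_smul, hu, smul_zero]
  have hfr : a ≤ finrank (ZMod p) (LinearMap.ker L) := by
    have h1 := LinearMap.finrank_range_add_finrank_ker L
    have h2 : finrank (ZMod p) (LinearMap.range L) ≤ r := by
      have := Submodule.finrank_le (LinearMap.range L)
      rwa [Module.finrank_pi, Fintype.card_fin] at this
    omega
  calc p ^ a ≤ p ^ finrank (ZMod p) (LinearMap.ker L) :=
        Nat.pow_le_pow_right (Nat.Prime.pos (Fact.out)) hfr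
    _ = Nat.card (LinearMap.ker L) := (card_submodule _).symm
    _ ≤ Nat.card (ann φ M) := by
        apply Nat.card_le_card_of_injective
          (fun x : LinearMap.ker L => (⟨x.1, hker x.2⟩ : ann φ M))
        intro x y hxy
        apply Subtype.ext
        simpa only [Subtype.mk.injEq] using hxy

end HProof
namespace HProof
open Module Submodule

variable {p : ℕ} [Fact p.Prime] {K : Type} [Field K] [Algebra (ZMod p) K]

lemma om_smul_left (c : K) (x y : K × K) : om (c • x) y = c * om x y := by
  simp only [om, Prod.smul_fst, Prod.smul_snd, smul_eq_mul]
  ring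

lemma om_sub_left (x y z : K × K) : om (x - y) z = om x z - om y z := by
  simp only [om, Prod.fst_sub, Prod.snd_sub]
  ring

lemma om_nondeg [Fintype K] (φ : K →ₗ[ZMod p] ZMod p) (hφ : φ ≠ 0) (s : K) (hs : s ≠ 0)
    (e : K × K) (h : ∀ y, φ (s * om e y) = 0) : e = 0 := by
  by_contra he
  have hh : ∀ w : K, φ (s * w) = 0 := by
    intro w
    rcases eq_or_ne e.1 0 with h1 | h1
    · have h2 : e.2 ≠ 0 := by
        intro h2
        exact he (Prod.ext_iff.mpr ⟨h1, h2⟩)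
      have := h (-(e.2⁻¹ * w), 0)
      have hom : om e (-(e.2⁻¹ * w), 0) = w := by
        simp only [om]
        field_simp
        simp
      rwa [hom] at this
    · have := h (0, e.1⁻¹ * w)
      have hom : om e (0, e.1⁻¹ * w) = w := by
        simp only [om]
        field_simp
        simp
      rwa [hom] at this
  obtain ⟨w, hw⟩ := nondeg φ hφ s hs
  exact hw (hh w)

/-- a `ZMod p`-linear "semilinear scaling" map -/
def mulsig (σ : K ≃+* K) (c : K) : K →ₗ[ZMod p] K :=
  AddMonoidHom.toZModLinearMap p
    (AddMonoidHom.mk' (fun w => c * σ w) (by intro x y; simp [map_add, mul_add]))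

lemma mulsig_apply (σ : K ≃+* K) (c : K) (w : K) : mulsig (p := p) σ c w = c * σ w := rfl

set_option maxHeartbeats 1000000 in
theorem master [Fintype K] {d a : ℕ} (hcard : Fintype.card K = p ^ d) (ha : 2 ≤ a)
    (had : a ≤ d)
    (hdiv : ∀ m, m ∣ d → m < d → m < a)
    (N N' : Submodule (ZMod p) K) (hN : N ≠ ⊤) (hN' : N' ≠ ⊤)
    (hfr' : finrank (ZMod p) N' + a ≤ d)
    (Φ : Heisenberg K 1 →* (Heisenberg K 1 ⧸ hat N'))
    (hs : Function.Surjective Φ) (hk : ∀ h, Φ h = 1 ↔ h ∈ hat N) :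
    ∃ (σ : K ≃+* K) (c : K), c ≠ 0 ∧ N.map (mulsig σ c) = N' := by
  classical
  have hp1 : 1 < p := (Fact.out : p.Prime).one_lt
  have hfinK : finrank (ZMod p) K = d := by
    have h := card_eq_pow_finrank (K := ZMod p) (V := K)
    rw [ZMod.card, hcard] at h
    exact (Nat.pow_right_injective hp1 h.symm)
  -- a nonzero linear functional
  have hd2 : 2 ≤ d := le_trans ha had
  set bb := Module.finBasis (ZMod p) K with hbb
  set φ : K →ₗ[ZMod p] ZMod p := bb.coord ⟨0, by omega⟩ with hφdef
  have hφ : φ ≠ 0 := by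
    intro h0
    have h1 : φ (bb ⟨0, by omega⟩) = 1 := by
      simp [hφdef]
    rw [h0] at h1
    simp at h1
  -- the induced additive bijection B on K × K
  set Bm := bmap Φ with hBm
  have hBadd : ∀ x y, Bm (x + y) = Bm x + Bm y := bmap_add Φ hN' hs
  set Bhom : (K × K) →+ (K × K) := AddMonoidHom.mk' Bm hBadd with hBhom
  have hBinj : Function.Injective Bm := by
    have : Function.Injective Bhom := by
      rw [injective_iff_map_eq_zero]
      exact fun x hx => bmap_inj Φ hN hN' hs hk x hx
    exact this
  have hBbij : Function.Bijective Bm := Finite.injective_iff_bijective.1 hBinj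
  have hB0 : Bm 0 = 0 := map_zero Bhom
  have hBneg : ∀ x, Bm (-x) = -(Bm x) := fun x => map_neg Bhom x
  -- the induced map α on K as a linear map to K ⧸ N'
  set αlin : K →ₗ[ZMod p] (K ⧸ N') :=
    AddMonoidHom.toZModLinearMap p (AddMonoidHom.mk' (amap Φ) (amap_add Φ hN' hs)) with hαlin
  have hαapp : ∀ s, αlin s = amap Φ s := fun s => rfl
  -- the fundamental equivalence
  have hiff : ∀ x y : K × K, om (Bm x) (Bm y) ∈ N' ↔ om x y ∈ N := by
    intro x y
    rw [← amap_ker Φ hN' hs hk, key_id Φ hN' hs, Submodule.Quotient.mk_eq_zero]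
  -- gamma
  have hgamma : ∀ t ∈ ann φ N', ∃ g : K, (g = 0 → t = 0) ∧
      ∀ x y : K × K, φ (t * om (Bm x) (Bm y)) = φ (g * om x y) := by
    intro t ht
    have hcond : N' ≤ LinearMap.ker (φ ∘ₗ LinearMap.mulLeft (ZMod p) t) := by
      intro w hw
      rw [LinearMap.mem_ker]
      simpa using ht w hw
    set χ := Submodule.liftQ N' (φ ∘ₗ LinearMap.mulLeft (ZMod p) t) hcond with hχ
    have hχapp : ∀ u : K, χ (Submodule.Quotient.mk u) = φ (t * u) := by
      intro u
      rw [hχ, Submodule.liftQ_apply]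
      rfl
    obtain ⟨g, hg⟩ := dual_rep φ hφ (χ ∘ₗ αlin)
    refine ⟨g, ?_, ?_⟩
    · intro hg0
      by_contra ht0
      obtain ⟨w, hw⟩ := nondeg φ hφ t ht0
      obtain ⟨s, hsw⟩ := amap_surj Φ hN hN' hs hk w
      have h1 : φ (t * w) = (χ ∘ₗ αlin) s := by
        rw [LinearMap.comp_apply, hαapp, hsw, hχapp]
      rw [hg s, hg0, zero_mul] at h1
      exact hw (by rw [h1]; simp)
    · intro x y
      have h1 : φ (t * om (Bm x) (Bm y)) = χ (Submodule.Quotient.mk (om (Bm x) (Bm y))) :=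
        (hχapp _).symm
      rw [← key_id Φ hN' hs, ← hαapp, ← LinearMap.comp_apply, hg] at h1
      exact h1
  -- the ratio lemma
  have hratio : ∀ t₁ ∈ ann φ N', ∀ t₂ ∈ ann φ N', t₁ ≠ 0 →
      ∃ c : K, ∀ x, Bm (c • x) = (t₁⁻¹ * t₂) • Bm x := by
    intro t₁ ht₁ t₂ ht₂ ht₁0
    obtain ⟨g₁, hg₁0, hg₁⟩ := hgamma t₁ ht₁
    obtain ⟨g₂, _, hg₂⟩ := hgamma t₂ ht₂
    have hg₁ne : g₁ ≠ 0 := fun h => ht₁0 (hg₁0 h)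
    refine ⟨g₁⁻¹ * g₂, ?_⟩
    intro x
    obtain ⟨u, hu⟩ := hBbij.2 ((t₁⁻¹ * t₂) • Bm x)
    have hyid : ∀ y, φ (g₁ * om ((g₁⁻¹ * g₂) • x - u) y) = 0 := by
      intro y
      rw [om_sub_left, mul_sub, map_sub, om_smul_left]
      have e1 : φ (g₁ * ((g₁⁻¹ * g₂) * om x y)) = φ (g₂ * om x y) := by
        rw [mul_assoc g₁⁻¹, mul_inv_cancel_left₀ hg₁ne]
      have e2 : φ (g₂ * om x y) = φ (t₂ * om (Bm x) (Bm y)) := (hg₂ x y).symm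
      have e3 : φ (t₂ * om (Bm x) (Bm y)) = φ (t₁ * om ((t₁⁻¹ * t₂) • Bm x) (Bm y)) := by
        rw [om_smul_left, mul_assoc t₁⁻¹, mul_inv_cancel_left₀ ht₁0]
      have e4 : φ (t₁ * om ((t₁⁻¹ * t₂) • Bm x) (Bm y)) = φ (g₁ * om u y) := by
        rw [← hu]
        exact hg₁ u y
      rw [e1, e2, e3, e4, sub_self]
    have := om_nondeg φ hφ g₁ hg₁ne _ hyid
    have hcx : (g₁⁻¹ * g₂) • x = u := by
      have h := sub_eq_zero.1 this
      exact h
    rw [hcx, hu]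
  -- the subfield of admissible multipliers
  set E : Subfield K :=
    { carrier := {c' | ∃ c : K, ∀ x, Bm (c • x) = c' • Bm x}
      zero_mem' := ⟨0, fun x => by rw [zero_smul, zero_smul, hB0]⟩
      one_mem' := ⟨1, fun x => by rw [one_smul, one_smul]⟩
      add_mem' := by
        rintro c₁' c₂' ⟨c₁, hc₁⟩ ⟨c₂, hc₂⟩
        exact ⟨c₁ + c₂, fun x => by
          rw [add_smul, hBadd, hc₁, hc₂, add_smul]⟩
      mul_mem' := by
        rintro c₁' c₂' ⟨c₁, hc₁⟩ ⟨c₂, hc₂⟩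
        exact ⟨c₁ * c₂, fun x => by
          rw [mul_smul, hc₁, hc₂, mul_smul]⟩
      neg_mem' := by
        rintro c' ⟨c, hc⟩
        exact ⟨-c, fun x => by rw [neg_smul, hBneg, hc, ← neg_smul]⟩
      inv_mem' := by
        rintro c' ⟨c, hc⟩
        rcases eq_or_ne c' 0 with rfl | hc'0
        · exact ⟨0, fun x => by rw [inv_zero, zero_smul, zero_smul, hB0]⟩
        · have hcne : c ≠ 0 := by
            rintro rfl
            obtain ⟨x, hx⟩ := hBbij.2 ((1 : K), (0 : K))
            have := hc x
            rw [zero_smul, hB0, hx] at this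
            have h1 := congrArg Prod.fst this
            simp at h1
            exact hc'0 h1.symm
          refine ⟨c⁻¹, fun x => ?_⟩
          have := hc (c⁻¹ • x)
          rw [smul_smul, mul_inv_cancel₀ hcne, one_smul] at this
          rw [this, smul_smul, inv_mul_cancel₀ hc'0, one_smul] } with hE
  -- E = ⊤
  have hEtop : ∀ c' : K, c' ∈ E := by
    by_contra hne
    push_neg at hne
    obtain ⟨c₀, hc₀⟩ := hne
    haveI : Fintype ↥E := Fintype.ofFinite _
    haveI : CharP K p := charP_of_injective_algebraMap
      (algebraMap (ZMod p) K).injective p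
    haveI : CharP ↥E p := Subfield.charP E p
    obtain ⟨mE, -, hEcard⟩ := FiniteField.card ↥E p
    letI : Algebra ↥E K := RingHom.toAlgebra E.subtype
    have h1 : Fintype.card K = Fintype.card ↥E ^ finrank ↥E K :=
      card_eq_pow_finrank (K := ↥E) (V := K)
    set k := finrank ↥E K with hkdef
    have hdk : p ^ d = p ^ (mE * k) := by
      rw [← hcard, h1, hEcard, ← pow_mul]
    have hdmk : d = mE * k := Nat.pow_right_injective hp1 hdk
    have hk1 : k ≠ 1 := by
      intro hk
      have hcardeq : Fintype.card ↥E = Fintype.card K := by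
        rw [h1, hk, pow_one]
      have hsurj : Function.Surjective (fun x : ↥E => (x : K)) :=
        ((Fintype.bijective_iff_injective_and_card _).2 ⟨Subtype.coe_injective, hcardeq⟩).2
      obtain ⟨y, hy⟩ := hsurj c₀
      exact hc₀ (hy ▸ y.2)
    have hk0 : k ≠ 0 := by
      intro hk
      rw [hdmk, hk, mul_zero] at hd2
      omega
    have hmEd : mE < d := by
      have h2 : 2 ≤ k := by omega
      have : (mE : ℕ) * 2 ≤ mE * k := Nat.mul_le_mul_left _ h2
      have hmEpos : 0 < (mE : ℕ) := mE.2
      omega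
    have hmEdvd : (mE : ℕ) ∣ d := ⟨k, hdmk⟩
    have hmEa : (mE : ℕ) < a := hdiv mE hmEdvd hmEd
    -- Sann embeds into E
    have hScard : p ^ a ≤ Nat.card (ann φ N') := by
      apply ann_card
      rw [hfinK]
      exact hfr'
    have hSnontriv : 1 < Nat.card (ann φ N') := by
      have : 1 < p ^ a := by
        calc 1 < p := hp1
        _ = p ^ 1 := (pow_one p).symm
        _ ≤ p ^ a := Nat.pow_le_pow_right (by omega) (by omega)
      omega
    haveI : Fintype (ann φ N') := Fintype.ofFinite _
    have : Nontrivial (ann φ N') := by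
      rw [← Fintype.one_lt_card_iff_nontrivial]
      rwa [Nat.card_eq_fintype_card] at hSnontriv
    obtain ⟨s₀, hs₀ne⟩ := exists_ne (0 : ann φ N')
    have hs₀K : (s₀ : K) ≠ 0 := fun h => hs₀ne (Subtype.ext h)
    have hinj : Function.Injective
        (fun t : ann φ N' => (⟨(s₀ : K)⁻¹ * (t : K), by
          rcases eq_or_ne (t : K) 0 with h0 | h0
          · rw [h0, mul_zero]; exact E.zero_mem
          · obtain ⟨c, hc⟩ := hratio (s₀ : K) s₀.2 (t : K) t.2 hs₀K
            exact ⟨c, hc⟩⟩ : ↥E)) := by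
      intro t₁ t₂ h
      have h1 : (s₀ : K)⁻¹ * (t₁ : K) = (s₀ : K)⁻¹ * (t₂ : K) := by
        simpa only [Subtype.mk.injEq] using h
      have h2 := mul_left_cancel₀ (inv_ne_zero hs₀K) h1
      exact Subtype.ext h2
    have hle : Nat.card (ann φ N') ≤ Nat.card ↥E :=
      Nat.card_le_card_of_injective _ hinj
    have hEcard' : Nat.card ↥E = p ^ (mE : ℕ) := by
      rw [Nat.card_eq_fintype_card, hEcard]
    have : p ^ a ≤ p ^ (mE : ℕ) := le_trans hScard (le_trans hle (le_of_eq hEcard'))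
    have : a ≤ (mE : ℕ) := Nat.pow_le_pow_iff_right hp1 |>.1 this
    omega
  -- partner uniqueness
  have huniq : ∀ c₁ c₂ c' : K, (∀ x, Bm (c₁ • x) = c' • Bm x) →
      (∀ x, Bm (c₂ • x) = c' • Bm x) → c₁ = c₂ := by
    intro c₁ c₂ c' h₁ h₂
    have h3 : ∀ x, Bm (c₁ • x) = Bm (c₂ • x) := fun x => (h₁ x).trans (h₂ x).symm
    have h4 : c₁ • ((1 : K), (0 : K)) = c₂ • ((1 : K), (0 : K)) := hBinj (h3 _)
    have h5 := congrArg Prod.fst h4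
    simpa using h5
  -- the semilinear structure map
  set τ : K → K := fun c' => Classical.choose (hEtop c') with hτdef
  have hτ : ∀ c' x, Bm (τ c' • x) = c' • Bm x := fun c' => Classical.choose_spec (hEtop c')
  have hτadd : ∀ a b : K, τ (a + b) = τ a + τ b := by
    intro a b
    refine huniq _ _ (a + b) (hτ _) ?_
    intro x
    rw [add_smul, hBadd, hτ, hτ, add_smul]
  have hτmul : ∀ a b : K, τ (a * b) = τ a * τ b := by
    intro a b
    refine huniq _ _ (a * b) (hτ _) ?_
    intro x
    rw [mul_smul, hτ, hτ, mul_smul]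
  have hτone : τ 1 = 1 := by
    refine huniq _ _ 1 (hτ _) ?_
    intro x
    rw [one_smul, one_smul]
  have hτzero : τ 0 = 0 := by
    refine huniq _ _ 0 (hτ _) ?_
    intro x
    rw [zero_smul, zero_smul, hB0]
  have hτinj : Function.Injective τ := by
    intro a b h
    have h1 : ∀ x, (a : K) • Bm x = b • Bm x := by
      intro x
      rw [← hτ a x, ← hτ b x, h]
    obtain ⟨x, hx⟩ := hBbij.2 ((1 : K), (0 : K))
    have h2 := h1 x
    rw [hx] at h2
    have h3 := congrArg Prod.fst h2
    simpa using h3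
  have hτbij : Function.Bijective τ := Finite.injective_iff_bijective.1 hτinj
  set τR : K →+* K :=
    { toFun := τ, map_one' := hτone, map_mul' := hτmul,
      map_zero' := hτzero, map_add' := hτadd } with hτR
  set σe : K ≃+* K := RingEquiv.ofBijective τR hτbij with hσe
  set σ : K ≃+* K := σe.symm with hσ
  have hsemi : ∀ (c : K) x, Bm (c • x) = σ c • Bm x := by
    intro c x
    have h1 : τ (σ c) = c := σe.apply_symm_apply c
    have h2 := hτ (σ c) x
    rw [h1] at h2
    exact h2
  -- expansion of B and the determinant
  set e₁ := Bm ((1 : K), (0 : K)) with he₁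
  set e₂ := Bm ((0 : K), (1 : K)) with he₂
  have hexp : ∀ u v : K, Bm (u, v) = σ u • e₁ + σ v • e₂ := by
    intro u v
    have h1 : ((u, v) : K × K) = u • ((1 : K), (0 : K)) + v • ((0 : K), (1 : K)) := by
      refine Prod.ext_iff.mpr ⟨?_, ?_⟩ <;> simp
    rw [h1, hBadd, hsemi, hsemi]
  set Δ : K := om e₁ e₂ with hΔdef
  have homeq : ∀ x y : K × K, om (Bm x) (Bm y) = Δ * σ (om x y) := by
    intro x y
    have hx := hexp x.1 x.2
    have hy := hexp y.1 y.2
    rw [show (x.1, x.2) = x from rfl] at hx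
    rw [show (y.1, y.2) = y from rfl] at hy
    rw [hx, hy]
    rw [hΔdef]
    simp only [om, Prod.fst_add, Prod.snd_add, Prod.smul_fst, Prod.smul_snd, smul_eq_mul,
      map_sub, map_mul]
    ring
  have hΔne : Δ ≠ 0 := by
    intro h0
    apply hN
    rw [eq_top_iff']
    intro w
    have h1 := hiff ((1 : K), (0 : K)) ((0 : K), w)
    rw [homeq, h0, zero_mul] at h1
    have h2 : om ((1 : K), (0 : K)) ((0 : K), w) = w := by simp [om]
    rw [h2] at h1
    exact h1.1 (N'.zero_mem)
  -- conclusion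
  refine ⟨σ, Δ, hΔne, ?_⟩
  have hmem : ∀ w : K, w ∈ N ↔ Δ * σ w ∈ N' := by
    intro w
    have h1 := hiff ((1 : K), (0 : K)) ((0 : K), w)
    rw [homeq] at h1
    have h2 : om ((1 : K), (0 : K)) ((0 : K), w) = w := by simp [om]
    rw [h2] at h1
    exact h1.symm
  ext v
  rw [Submodule.mem_map]
  constructor
  · rintro ⟨w, hw, rfl⟩
    rw [mulsig_apply]
    exact (hmem w).1 hw
  · intro hv
    refine ⟨σ.symm (Δ⁻¹ * v), ?_, ?_⟩
    · rw [hmem, RingEquiv.apply_symm_apply, mul_inv_cancel_left₀ hΔne]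
      exact hv
    · rw [mulsig_apply, RingEquiv.apply_symm_apply, mul_inv_cancel_left₀ hΔne]

end HProof
namespace HProof
open Module Submodule

variable {p : ℕ} [Fact p.Prime] {K : Type} [Field K] [Algebra (ZMod p) K]

/-- semilinear equivalence of submodules -/
def rel (N M : Submodule (ZMod p) K) : Prop :=
  ∃ (σ : K ≃+* K) (c : K), c ≠ 0 ∧ N.map (mulsig σ c) = M

lemma mulsig_inj (σ : K ≃+* K) (c : K) (hc : c ≠ 0) :
    Function.Injective (mulsig (p := p) σ c) := by
  intro x y h
  rw [mulsig_apply, mulsig_apply] at h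
  exact σ.injective (mul_left_cancel₀ hc h)

lemma rel_refl (N : Submodule (ZMod p) K) : rel N N := by
  refine ⟨RingEquiv.refl K, 1, one_ne_zero, ?_⟩
  ext v
  simp [Submodule.mem_map, mulsig_apply]

lemma rel_symm {N M : Submodule (ZMod p) K} (h : rel N M) : rel M N := by
  obtain ⟨σ, c, hc, heq⟩ := h
  refine ⟨σ.symm, σ.symm c⁻¹, by simp [hc], ?_⟩
  rw [← heq, ← Submodule.map_comp]
  have hcomp : (mulsig (p := p) σ.symm (σ.symm c⁻¹)) ∘ₗ (mulsig σ c) = LinearMap.id := by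
    ext w
    simp only [LinearMap.comp_apply, mulsig_apply, LinearMap.id_apply]
    rw [map_mul, RingEquiv.symm_apply_apply, ← mul_assoc, ← map_mul,
      inv_mul_cancel₀ hc, map_one, one_mul]
  rw [hcomp, Submodule.map_id]

lemma rel_trans {N M P : Submodule (ZMod p) K} (h1 : rel N M) (h2 : rel M P) : rel N P := by
  obtain ⟨σ₁, c₁, hc₁, he₁⟩ := h1
  obtain ⟨σ₂, c₂, hc₂, he₂⟩ := h2
  refine ⟨σ₁.trans σ₂, c₂ * σ₂ c₁, ?_, ?_⟩
  · simp only [ne_eq, mul_eq_zero, not_or]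
    exact ⟨hc₂, fun h => hc₁ (by simpa using σ₂.injective (by simpa using h))⟩
  · rw [← he₂, ← he₁, ← Submodule.map_comp]
    congr 1
    ext w
    simp only [LinearMap.comp_apply, mulsig_apply, RingEquiv.coe_trans, Function.comp_apply]
    rw [map_mul]
    ring

lemma rel_card [Fintype K] {N M : Submodule (ZMod p) K} (h : rel N M) :
    Nat.card N = Nat.card M := by
  obtain ⟨σ, c, hc, heq⟩ := h
  rw [← heq]
  exact Nat.card_congr (Submodule.equivMapOfInjective _ (mulsig_inj σ c hc) N).toEquiv

end HProof
namespace HProof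
open Module Submodule

variable {p : ℕ} [Fact p.Prime] {K : Type} [Field K] [Algebra (ZMod p) K]

lemma graph_family [Fintype K] {d a b : ℕ} (hcard : Fintype.card K = p ^ d)
    (hab : a + b = d) :
    ∃ G : Finset (Submodule (ZMod p) K),
      G.card = p ^ (a * b) ∧ ∀ N ∈ G, Nat.card N = p ^ b := by
  classical
  have hp1 : 1 < p := (Fact.out : p.Prime).one_lt
  have hfinK : finrank (ZMod p) K = d := by
    have h := card_eq_pow_finrank (K := ZMod p) (V := K)
    rw [ZMod.card, hcard] at h
    exact Nat.pow_right_injective hp1 h.symm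
  have hd : d = b + a := by omega
  set ie : Fin d ≃ (Fin b ⊕ Fin a) := (finCongr hd).trans finSumFinEquiv.symm with hie
  set bbd : Basis (Fin d) (ZMod p) K := (Module.finBasis (ZMod p) K).reindex (finCongr hfinK)
    with hbbd
  set Ψ : K ≃ₗ[ZMod p] ((Fin b → ZMod p) × (Fin a → ZMod p)) :=
    bbd.equivFun ≪≫ₗ (LinearEquiv.funCongrLeft (ZMod p) (ZMod p) ie.symm) ≪≫ₗ
      LinearEquiv.sumArrowLequivProdArrow _ _ _ _ with hΨ
  set gN : Matrix (Fin a) (Fin b) (ZMod p) → Submodule (ZMod p) K :=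
    fun A => Submodule.comap (Ψ : K →ₗ[ZMod p] _) (LinearMap.graph A.mulVecLin) with hgN
  have hcomap : ∀ A, gN A = Submodule.map (Ψ.symm : _ →ₗ[ZMod p] K)
      (LinearMap.graph (Matrix.mulVecLin A)) := by
    intro A
    rw [hgN]
    exact Submodule.comap_equiv_eq_map_symm Ψ (LinearMap.graph A.mulVecLin)
  have hginj : Function.Injective gN := by
    intro A A' h
    rw [hcomap, hcomap] at h
    have h1 := Submodule.map_injective_of_injective
      (f := Ψ.symm.toLinearMap) Ψ.symm.injective h
    -- graphs equal implies linear maps equal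
    have h2 : ∀ w, A.mulVecLin w = A'.mulVecLin w := by
      intro w
      have hm : (w, A.mulVecLin w) ∈ LinearMap.graph A.mulVecLin := by
        rw [LinearMap.mem_graph_iff]
      rw [h1, LinearMap.mem_graph_iff] at hm
      exact hm
    -- conclude matrices equal
    ext i j
    have h3 := congrFun (h2 (Pi.single j 1)) i
    simpa [Matrix.mulVecLin, Matrix.mulVec_single] using h3
  refine ⟨Finset.univ.image gN, ?_, ?_⟩
  · rw [Finset.card_image_of_injective _ hginj, Finset.card_univ]
    have : Fintype.card (Matrix (Fin a) (Fin b) (ZMod p))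
        = Fintype.card (Fin a → Fin b → ZMod p) := rfl
    rw [this, Fintype.card_fun, Fintype.card_fun, ZMod.card, Fintype.card_fin,
      Fintype.card_fin, ← pow_mul, mul_comm b a]
  · intro N hN
    obtain ⟨A, -, rfl⟩ := Finset.mem_image.1 hN
    have e2 : (LinearMap.graph (Matrix.mulVecLin A)) ≃ (Fin b → ZMod p) :=
      { toFun := fun g => g.1.1
        invFun := fun w => ⟨(w, A.mulVecLin w), by rw [LinearMap.mem_graph_iff]⟩
        left_inv := by
          rintro ⟨⟨w, v⟩, hg⟩
          rw [LinearMap.mem_graph_iff] at hg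
          simp only at hg
          subst hg
          rfl
        right_inv := fun w => rfl }
    have e1 : (LinearMap.graph (Matrix.mulVecLin A)) ≃
        (gN A) := by
      rw [hcomap]
      exact (Ψ.symm.submoduleMap (LinearMap.graph A.mulVecLin)).toEquiv
    rw [← Nat.card_congr e1, Nat.card_congr e2, Nat.card_eq_fintype_card,
      Fintype.card_fun, ZMod.card, Fintype.card_fin]

lemma card_heis [Fintype K] : Nat.card (Heisenberg K 1) = (Fintype.card K) ^ 3 := by
  have e : Heisenberg K 1 ≃ (K × K × K) :=
    { toFun := fun h => (h.x 0, h.y 0, h.z)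
      invFun := fun t => el t.1 t.2.1 t.2.2
      left_inv := fun h => (eq_el h).symm
      right_inv := fun t => rfl }
  rw [Nat.card_congr e, Nat.card_prod, Nat.card_prod, Nat.card_eq_fintype_card]
  ring

lemma hat_card [Fintype K] (N : Submodule (ZMod p) K) :
    Nat.card (hat N) = Nat.card N := by
  refine Nat.card_congr ?_
  refine
    { toFun := fun g => ⟨g.1.z, g.2.2.2⟩
      invFun := fun z => ⟨el 0 0 z.1, el_mem_hat.2 z.2⟩
      left_inv := ?_
      right_inv := fun z => rfl }
  rintro ⟨g, hg⟩
  obtain ⟨hx, hy, -⟩ := hg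
  apply Subtype.ext
  have h := eq_el g
  rw [show g.x 0 = 0 from congrFun hx 0, show g.y 0 = 0 from congrFun hy 0] at h
  exact h.symm

lemma hat_index [Fintype K] {d b n : ℕ} (hcard : Fintype.card K = p ^ d)
    (N : Submodule (ZMod p) K) (hN : Nat.card N = p ^ b) (hbn : b + n = 3 * d) :
    (hat N).index = p ^ n := by
  have hp0 : 0 < p := (Fact.out : p.Prime).pos
  have h1 := Subgroup.card_mul_index (hat N)
  rw [hat_card, hN, card_heis, hcard, ← pow_mul, show d * 3 = 3 * d from by ring, ← hbn,
    pow_add] at h1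
  exact Nat.eq_of_mul_eq_mul_left (by positivity) h1

lemma div_helper {d n : ℕ} (h2 : 2 * d + 2 ≤ n)
    (h : (d % 2 = 1 ∧ 7 * d < 3 * n) ∨ 5 * d < 2 * n) :
    ∀ m, m ∣ d → m < d → m < n - 2 * d := by
  intro m hdvd hlt
  obtain ⟨k, hk⟩ := hdvd
  have hk0 : k ≠ 0 := by rintro rfl; omega
  have hk1 : k ≠ 1 := by rintro rfl; omega
  rcases h with ⟨hodd, h7⟩ | h5
  · have hk2 : k ≠ 2 := by rintro rfl; omega
    have hk3 : 3 ≤ k := by omega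
    have h3m : 3 * m ≤ d := by
      calc 3 * m = m * 3 := by ring
      _ ≤ m * k := Nat.mul_le_mul_left m hk3
      _ = d := hk.symm
    omega
  · have hk2 : 2 ≤ k := by omega
    have h2m : 2 * m ≤ d := by
      calc 2 * m = m * 2 := by ring
      _ ≤ m * k := Nat.mul_le_mul_left m hk2
      _ = d := hk.symm
    omega

lemma exists_d {n : ℕ} (hn : 12 ≤ n) :
    ∃ d : ℕ, 0 < d ∧ 2 * d + 2 ≤ n ∧ n ≤ 3 * d ∧ 5 * n ≤ 12 * d + 60 ∧
      12 * d ≤ 5 * n + 60 ∧ (∀ m, m ∣ d → m < d → m < n - 2 * d) := by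
  by_cases h17 : n ≤ 17
  · interval_cases n
    · exact ⟨5, by norm_num, by norm_num, by norm_num, by norm_num, by norm_num,
        div_helper (by norm_num) (Or.inl (by norm_num))⟩
    · exact ⟨5, by norm_num, by norm_num, by norm_num, by norm_num, by norm_num,
        div_helper (by norm_num) (Or.inl (by norm_num))⟩
    · exact ⟨5, by norm_num, by norm_num, by norm_num, by norm_num, by norm_num,
        div_helper (by norm_num) (Or.inl (by norm_num))⟩
    · exact ⟨5, by norm_num, by norm_num, by norm_num, by norm_num, by norm_num,
        div_helper (by norm_num) (Or.inl (by norm_num))⟩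
    · exact ⟨6, by norm_num, by norm_num, by norm_num, by norm_num, by norm_num,
        div_helper (by norm_num) (Or.inr (by norm_num))⟩
    · exact ⟨7, by norm_num, by norm_num, by norm_num, by norm_num, by norm_num,
        div_helper (by norm_num) (Or.inl (by norm_num))⟩
  · push_neg at h17
    by_cases hxy : (5 * n - 49) / 12 ≤ (n + 2) / 3
    · -- use x = (n+2)/3
      set x := (n + 2) / 3 with hx
      by_cases hpar : x % 2 = 1
      · refine ⟨x, by omega, by omega, by omega, by omega, by omega,
          div_helper (by omega) (Or.inl ⟨hpar, by omega⟩)⟩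
      · refine ⟨x + 1, by omega, by omega, by omega, by omega, by omega,
          div_helper (by omega) (Or.inl ⟨by omega, by omega⟩)⟩
    · push_neg at hxy
      set y := (5 * n - 49) / 12 with hy
      by_cases hpar : y % 2 = 1
      · refine ⟨y, by omega, by omega, by omega, by omega, by omega,
          div_helper (by omega) (Or.inl ⟨hpar, by omega⟩)⟩
      · refine ⟨y + 1, by omega, by omega, by omega, by omega, by omega,
          div_helper (by omega) (Or.inl ⟨by omega, by omega⟩)⟩

end HProof
theorem heisenberg_many_nonisomorphic_quotients
    (p n : ℕ) [Fact p.Prime] (hp : Odd p) (hn : 12 ≤ n) :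
    ∃ d : ℕ, 0 < d ∧ 2 * d + 2 ≤ n ∧ n ≤ 3 * d ∧
      |12 * (d : ℤ) - 5 * (n : ℤ)| ≤ 60 ∧
      Nat.card (Heisenberg (GaloisField p d) 1) = p ^ (3 * d) ∧
      ∃ 𝒮 : Finset (Subgroup (Heisenberg (GaloisField p d) 1)),
        (∀ N ∈ 𝒮, N ≤ Subgroup.center (Heisenberg (GaloisField p d) 1) ∧
          N.index = p ^ n) ∧
        p ^ ((n - 2 * d) * (3 * d - n)) ≤ 𝒮.card * (d * (p ^ d - 1)) ∧
        (∀ N ∈ 𝒮, ∀ N' ∈ 𝒮, N ≠ N' →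
          ∀ [N.Normal] [N'.Normal],
            IsEmpty ((Heisenberg (GaloisField p d) 1 ⧸ N) ≃*
              (Heisenberg (GaloisField p d) 1 ⧸ N'))) := by
  classical
  open HProof Module in
  obtain ⟨d, hd0, h2d, h3d, h5n, h12d, hdiv⟩ := HProof.exists_d hn
  have hp1 : 1 < p := (Fact.out : p.Prime).one_lt
  set K := GaloisField p d with hKdef
  haveI : Fintype K := Fintype.ofFinite _
  have hcard : Fintype.card K = p ^ d := by
    rw [← Nat.card_eq_fintype_card]
    exact GaloisField.card p d (by omega)
  set a := n - 2 * d with hadef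
  set b := 3 * d - n with hbdef
  have ha : 2 ≤ a := by omega
  have hab : a + b = d := by omega
  have hbn : b + n = 3 * d := by omega
  have had : a ≤ d := by omega
  have hfinK : finrank (ZMod p) K = d := by
    have h := card_eq_pow_finrank (K := ZMod p) (V := K)
    rw [ZMod.card, hcard] at h
    exact Nat.pow_right_injective hp1 h.symm
  obtain ⟨G, hGcard, hGmem⟩ := HProof.graph_family (p := p) (K := K) hcard hab
  haveI : Finite (Submodule (ZMod p) K) :=
    Finite.of_injective (fun S => (S : Set K)) SetLike.coe_injective
  haveI : Fintype (Submodule (ZMod p) K) := Fintype.ofFinite _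
  set eqv := Fintype.equivFin (Submodule (ZMod p) K) with heqv
  have hne : ∀ N : Submodule (ZMod p) K,
      (((Finset.univ.filter (fun M => HProof.rel N M))).image eqv).Nonempty := fun N =>
    ⟨eqv N, Finset.mem_image_of_mem _ (Finset.mem_filter.2 ⟨Finset.mem_univ _,
      HProof.rel_refl N⟩)⟩
  set pick : Submodule (ZMod p) K → Submodule (ZMod p) K := fun N =>
    eqv.symm ((((Finset.univ.filter (fun M => HProof.rel N M))).image eqv).min' (hne N))
    with hpickdef
  have hpick_mem : ∀ N, HProof.rel N (pick N) := by
    intro N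
    have h1 := Finset.min'_mem _ (hne N)
    obtain ⟨M, hM, hMe⟩ := Finset.mem_image.1 h1
    have h2 : pick N = M := by
      rw [hpickdef]
      simp only
      rw [← hMe, Equiv.symm_apply_apply]
    rw [h2]
    exact (Finset.mem_filter.1 hM).2
  have hpick_eq : ∀ N M, HProof.rel N M → pick N = pick M := by
    intro N M h
    have hfilter : (Finset.univ.filter (fun X => HProof.rel N X))
        = (Finset.univ.filter (fun X => HProof.rel M X)) := by
      ext X
      simp only [Finset.mem_filter, Finset.mem_univ, true_and]
      exact ⟨fun hNX => HProof.rel_trans (HProof.rel_symm h) hNX,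
        fun hMX => HProof.rel_trans h hMX⟩
    have hmineq : ∀ (s t : Finset (Fin (Fintype.card (Submodule (ZMod p) K))))
        (hs : s.Nonempty) (ht : t.Nonempty), s = t → s.min' hs = t.min' ht := by
      rintro s t hs ht rfl
      rfl
    rw [hpickdef]
    simp only
    exact congrArg _ (hmineq _ _ _ _ (by rw [hfilter]))
  have hpick_idem : ∀ N, pick (pick N) = pick N :=
    fun N => (hpick_eq N (pick N) (hpick_mem N)).symm
  set S0 := G.image pick with hS0def
  set SS := S0.image (HProof.hat (p := p) (K := K)) with hSSdef
  have hS0card : ∀ M ∈ S0, Nat.card M = p ^ b := by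
    intro M hM
    obtain ⟨N, hN, rfl⟩ := Finset.mem_image.1 hM
    rw [← HProof.rel_card (hpick_mem N)]
    exact hGmem N hN
  have hS0fr : ∀ M ∈ S0, finrank (ZMod p) M = b := by
    intro M hM
    have h1 := HProof.card_submodule (p := p) M
    rw [hS0card M hM] at h1
    exact (Nat.pow_right_injective hp1 h1).symm
  have hS0netop : ∀ M ∈ S0, M ≠ ⊤ := by
    intro M hM htop
    have h1 := hS0fr M hM
    rw [htop] at h1
    rw [finrank_top, hfinK] at h1
    omega
  have hS0pick : ∀ M ∈ S0, pick M = M := by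
    intro M hM
    obtain ⟨N, hN, rfl⟩ := Finset.mem_image.1 hM
    exact hpick_idem N
  refine ⟨d, by omega, by omega, by omega, ?_, ?_, SS, ?_, ?_, ?_⟩
  · rw [abs_le]
    constructor <;> (push_cast; omega)
  · rw [HProof.card_heis, hcard, ← pow_mul]
    congr 1
    omega
  · intro N hN
    obtain ⟨M, hM, rfl⟩ := Finset.mem_image.1 hN
    exact ⟨HProof.hat_le_center M, HProof.hat_index hcard M (hS0card M hM) hbn⟩
  · -- the counting estimate
    haveI : Finite (K ≃+* K) := Finite.of_injective (fun e => (e : K → K))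
      (fun e₁ e₂ h => by ext x; exact congrFun h x)
    haveI : Fintype (K ≃+* K) := Fintype.ofFinite _
    have equivAut : (K ≃+* K) ≃ (K ≃ₐ[ZMod p] K) :=
      { toFun := fun σ => AlgEquiv.ofRingEquiv (f := σ) (fun z => DFunLike.congr_fun
          (RingHom.ext_zmod ((σ : K →+* K).comp (algebraMap (ZMod p) K))
            (algebraMap (ZMod p) K)) z)
        invFun := fun e => e.toRingEquiv
        left_inv := fun σ => by ext x; rfl
        right_inv := fun e => by ext x; rfl }
    have hAutcard : Fintype.card (K ≃+* K) = d := by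
      rw [Fintype.card_congr equivAut]
      have h1 := IsGalois.card_aut_eq_finrank (ZMod p) K
      rw [← Nat.card_eq_fintype_card]
      rw [h1, hfinK]
    have hUcard : Fintype.card Kˣ = p ^ d - 1 := by
      rw [Fintype.card_units, hcard]
    have hfiber : ∀ M ∈ G.image pick,
        (G.filter (fun N => pick N = M)).card ≤ d * (p ^ d - 1) := by
      intro M _
      have hsub : (G.filter (fun N => pick N = M)) ⊆
          (Finset.univ : Finset ((K ≃+* K) × Kˣ)).image
            (fun sc => Submodule.map (HProof.mulsig sc.1 (sc.2 : K)) M) := by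
        intro N hNf
        obtain ⟨hNG, hpe⟩ := Finset.mem_filter.1 hNf
        have hrel : HProof.rel M N := HProof.rel_symm (hpe ▸ hpick_mem N)
        obtain ⟨σ, c, hc, heq⟩ := hrel
        exact Finset.mem_image.2 ⟨(σ, Units.mk0 c hc), Finset.mem_univ _, heq⟩
      calc (G.filter (fun N => pick N = M)).card
          ≤ _ := Finset.card_le_card hsub
        _ ≤ (Finset.univ : Finset ((K ≃+* K) × Kˣ)).card := Finset.card_image_le
        _ = d * (p ^ d - 1) := by
            rw [Finset.card_univ, Fintype.card_prod, hAutcard, hUcard]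
    have hmain : G.card ≤ (d * (p ^ d - 1)) * S0.card :=
      Finset.card_le_mul_card_image G (d * (p ^ d - 1)) hfiber
    have hSScard : SS.card = S0.card :=
      Finset.card_image_of_injective _ HProof.hat_injective
    calc p ^ (a * b) = G.card := hGcard.symm
      _ ≤ (d * (p ^ d - 1)) * S0.card := hmain
      _ = SS.card * (d * (p ^ d - 1)) := by rw [hSScard]; ring
  · -- pairwise nonisomorphic quotients
    intro N hN N' hN' hNne inst1 inst2
    obtain ⟨M, hM, rfl⟩ := Finset.mem_image.1 hN
    obtain ⟨M', hM', rfl⟩ := Finset.mem_image.1 hN'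
    have hMM' : M ≠ M' := fun h => hNne (by rw [h])
    refine ⟨fun e => ?_⟩
    set Φ : Heisenberg K 1 →* (Heisenberg K 1 ⧸ HProof.hat M') :=
      e.toMonoidHom.comp (QuotientGroup.mk' (HProof.hat M)) with hΦdef
    have hsurj : Function.Surjective Φ := by
      have h1 : ⇑Φ = ⇑e ∘ ⇑(QuotientGroup.mk' (HProof.hat M)) := rfl
      rw [h1]
      exact e.surjective.comp (QuotientGroup.mk'_surjective _)
    have hker : ∀ h, Φ h = 1 ↔ h ∈ HProof.hat M := by
      intro h
      rw [hΦdef, MonoidHom.comp_apply]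
      have h1 : e.toMonoidHom ((QuotientGroup.mk' (HProof.hat M)) h) = 1
          ↔ (QuotientGroup.mk' (HProof.hat M)) h = 1 :=
        MulEquiv.map_eq_one_iff e
      rw [h1]
      exact QuotientGroup.eq_one_iff h
    obtain ⟨σ, c, hc, heq⟩ := HProof.master hcard ha had hdiv M M'
      (hS0netop M hM) (hS0netop M' hM')
      (by rw [hS0fr M' hM']; omega) Φ hsurj hker
    have hrel : HProof.rel M M' := ⟨σ, c, hc, heq⟩
    have : M = M' := by
      rw [← hS0pick M hM, ← hS0pick M' hM']
      exact hpick_eq M M' hrel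
    exact hMM' this
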